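/- Let χ be a probability distribution on a finite set A. There exists a constant c > 0, depending only on χ, such that for every ε ∈ (0,1) and every n ≥ 1, setting δ := c · √(ln(1/ε)/n), the probability that a sample k drawn from χ^n lies in the core set satisfies Pr_{k ← χ^n}[k ∈ C^{n,δ}_χ] ≥ 1 − ε. -/

import Mathlib

open scoped Classical

set_option maxHeartbeats 2000000 in
/-- **Core set with probability mass 1 − ε.** Let `χ` be a distribution on a finite
set `A` with pmf `P`, Shannon entropy `H(χ) = −∑ a, P a · log₂ (P a)`, and core set
`C^{n,δ}_χ = { a ∈ A^n : ∏ i, P (a i) ≥ 2^{−H(χ)·n − δ·n} }`. There is a constant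
`c > 0` (depending only on `χ`) such that for every `ε ∈ (0,1)` and every `n ≥ 1`,
taking `δ = c·√(ln(1/ε)/n)` gives `Pr_{k ← χ^n}[k ∈ C^{n,δ}_χ] ≥ 1 − ε`. -/
theorem core_set_mass_eps {A : Type*} [Fintype A]
    (P : A → ℝ) (hpos : ∀ a, 0 < P a) (hle : ∀ a, P a ≤ 1)
    (hsum : ∑ a, P a = 1) :
    ∃ c > (0 : ℝ), ∀ ε : ℝ, 0 < ε → ε < 1 → ∀ n : ℕ, 1 ≤ n →
      1 - ε ≤
        ∑ a ∈ Finset.univ.filter (fun a : Fin n → A =>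
            (2 : ℝ) ^ (-((-∑ x, P x * Real.logb 2 (P x)) * n) -
              (c * Real.sqrt (Real.log (1 / ε) / n)) * n) ≤ ∏ i, P (a i)),
          ∏ i, P (a i) := by
  classical
  set Y : A → ℝ := fun a => -Real.log (P a) with hY
  set μ : ℝ := ∑ a, P a * Y a with hμ
  set B : ℝ := 1 + ∑ a, |Y a - μ| with hBdef
  have hBsum_nonneg : 0 ≤ ∑ a, |Y a - μ| :=
    Finset.sum_nonneg fun a _ => abs_nonneg _
  have hB1 : 1 ≤ B := by rw [hBdef]; linarith
  have hB0 : 0 < B := lt_of_lt_of_le one_pos hB1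
  have hBa : ∀ a, |Y a - μ| ≤ B := by
    intro a
    have h1 := Finset.single_le_sum (f := fun a => |Y a - μ|)
      (fun a _ => abs_nonneg _) (Finset.mem_univ a)
    rw [hBdef]; linarith
  have hlog2 : 0 < Real.log 2 := Real.log_pos one_lt_two
  refine ⟨2 * B / Real.log 2, by positivity, ?_⟩
  intro ε hε hε1 n hn
  set L : ℝ := Real.log (1 / ε) with hL
  have hL0 : 0 < L := Real.log_pos (by rw [lt_div_iff₀ hε]; linarith)
  have hn0 : (0 : ℝ) < n := by exact_mod_cast Nat.lt_of_lt_of_le Nat.zero_lt_one hn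
  set δ' : ℝ := 2 * B * Real.sqrt (L / n) with hδ'
  have hsqrt_pos : 0 < Real.sqrt (L / n) := Real.sqrt_pos.2 (div_pos hL0 hn0)
  have hδ'0 : 0 < δ' := by rw [hδ']; positivity
  have hδ'sq : δ' ^ 2 = 4 * B ^ 2 * (L / n) := by
    rw [hδ', mul_pow, mul_pow, Real.sq_sqrt (div_pos hL0 hn0).le]; ring
  -- rewrite the filter condition
  have hcδ : (2 * B / Real.log 2) * Real.sqrt (Real.log (1 / ε) / n) * Real.log 2 = δ' := by
    rw [hδ', ← hL]; field_simp
  have hμlog : (-∑ x, P x * Real.logb 2 (P x)) * Real.log 2 = μ := by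
    rw [hμ, hY]
    rw [neg_mul, Finset.sum_mul]
    rw [← Finset.sum_neg_distrib]
    apply Finset.sum_congr rfl
    intro a _
    rw [Real.logb, div_eq_mul_inv]
    field_simp
  have hiff : ∀ a : Fin n → A,
      ((2 : ℝ) ^ (-((-∑ x, P x * Real.logb 2 (P x)) * n) -
        ((2 * B / Real.log 2) * Real.sqrt (Real.log (1 / ε) / n)) * n) ≤ ∏ i, P (a i))
      ↔ ∑ i, Y (a i) ≤ μ * n + δ' * n := by
    intro a
    have hprod : 0 < ∏ i, P (a i) := Finset.prod_pos fun i _ => hpos (a i)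
    rw [Real.rpow_le_iff_le_log two_pos hprod]
    rw [Real.log_prod (fun i _ => (hpos (a i)).ne')]
    have hYsum : ∑ i, Real.log (P (a i)) = -∑ i, Y (a i) := by
      rw [hY, ← Finset.sum_neg_distrib]; simp
    rw [hYsum]
    have hE : (-((-∑ x, P x * Real.logb 2 (P x)) * n) -
        ((2 * B / Real.log 2) * Real.sqrt (Real.log (1 / ε) / n)) * n) * Real.log 2
        = -(μ * n) - δ' * n := by
      rw [sub_mul, neg_mul ((-∑ x, P x * Real.logb 2 (P x)) * n), mul_comm _ (Real.log 2),
        mul_comm _ (Real.log 2), ← mul_assoc, ← mul_assoc, mul_comm (Real.log 2), mul_comm (Real.log 2),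
        hμlog, hcδ]
    rw [hE]
    constructor
    · intro h; linarith
    · intro h; linarith
  have hfilter : (Finset.univ.filter (fun a : Fin n → A =>
        (2 : ℝ) ^ (-((-∑ x, P x * Real.logb 2 (P x)) * n) -
          ((2 * B / Real.log 2) * Real.sqrt (Real.log (1 / ε) / n)) * n) ≤ ∏ i, P (a i)))
      = Finset.univ.filter (fun a : Fin n → A => ∑ i, Y (a i) ≤ μ * n + δ' * n) := by
    apply Finset.filter_congr
    intro a _
    exact hiff a
  rw [hfilter]
  -- total mass is 1
  have htot : ∑ a : Fin n → A, ∏ i, P (a i) = 1 := by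
    have : (∏ _i : Fin n, ∑ j, P j) = ∑ a ∈ Fintype.piFinset (fun _ : Fin n => Finset.univ),
        ∏ i, P (a i) := Finset.prod_univ_sum _ _
    rw [Fintype.piFinset_univ] at this
    rw [← this]
    simp [hsum]
  -- bound the bad mass
  have hbad : ∑ a ∈ Finset.univ.filter
      (fun a : Fin n → A => ¬ (∑ i, Y (a i) ≤ μ * n + δ' * n)), ∏ i, P (a i) ≤ ε := by
    by_cases hcase : δ' ≤ 2 * B
    · -- Chernoff bound
      set t : ℝ := δ' / (2 * B ^ 2) with ht
      have ht0 : 0 < t := div_pos hδ'0 (by positivity)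
      have htB : t * B ≤ 1 := by
        have : t * B = δ' / (2 * B) := by rw [ht]; field_simp
        rw [this, div_le_one (by positivity)]; linarith
      -- pointwise exp bound
      have hstep : ∀ a, Real.exp (t * (Y a - μ)) ≤ 1 + t * (Y a - μ) + t ^ 2 * B ^ 2 := by
        intro a
        have habs1 : |t * (Y a - μ)| ≤ 1 := by
          rw [abs_mul, abs_of_pos ht0]
          calc t * |Y a - μ| ≤ t * B := mul_le_mul_of_nonneg_left (hBa a) ht0.le
            _ ≤ 1 := htB
        have h := (abs_le.1 (Real.abs_exp_sub_one_sub_id_le habs1)).2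
        have h2 : (t * (Y a - μ)) ^ 2 ≤ t ^ 2 * B ^ 2 := by
          have hsq : (Y a - μ) ^ 2 ≤ B ^ 2 := by
            have h3 := abs_le.1 (hBa a)
            nlinarith [h3.1, h3.2]
          calc (t * (Y a - μ)) ^ 2 = t ^ 2 * (Y a - μ) ^ 2 := by ring
            _ ≤ t ^ 2 * B ^ 2 := mul_le_mul_of_nonneg_left hsq (sq_nonneg t)
        linarith
      -- MGF bound
      have hM : ∑ a, P a * Real.exp (t * Y a) ≤ Real.exp (t * μ + t ^ 2 * B ^ 2) := by
        have e1 : ∑ a, P a * Real.exp (t * Y a)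
            = Real.exp (t * μ) * ∑ a, P a * Real.exp (t * (Y a - μ)) := by
          rw [Finset.mul_sum]
          apply Finset.sum_congr rfl
          intro a _
          rw [show t * Y a = t * μ + t * (Y a - μ) by ring, Real.exp_add]
          ring
        have e2 : ∑ a, P a * Real.exp (t * (Y a - μ)) ≤ 1 + t ^ 2 * B ^ 2 := by
          calc ∑ a, P a * Real.exp (t * (Y a - μ))
              ≤ ∑ a, P a * (1 + t * (Y a - μ) + t ^ 2 * B ^ 2) :=
                Finset.sum_le_sum fun a _ =>
                  mul_le_mul_of_nonneg_left (hstep a) (hpos a).le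
            _ = 1 + t ^ 2 * B ^ 2 := by
                have hterm : ∀ x : A, P x * (1 + t * (Y x - μ) + t ^ 2 * B ^ 2)
                    = P x + t * (P x * Y x) - t * μ * P x + t ^ 2 * B ^ 2 * P x :=
                  fun x => by ring
                rw [Finset.sum_congr rfl fun x _ => hterm x, Finset.sum_add_distrib,
                  Finset.sum_sub_distrib, Finset.sum_add_distrib, ← Finset.mul_sum,
                  ← Finset.mul_sum, ← Finset.mul_sum, hsum, ← hμ]
                ring
        calc ∑ a, P a * Real.exp (t * Y a)
            = Real.exp (t * μ) * ∑ a, P a * Real.exp (t * (Y a - μ)) := e1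
          _ ≤ Real.exp (t * μ) * (1 + t ^ 2 * B ^ 2) :=
              mul_le_mul_of_nonneg_left e2 (Real.exp_nonneg _)
          _ ≤ Real.exp (t * μ) * Real.exp (t ^ 2 * B ^ 2) := by
              have h := Real.add_one_le_exp (t ^ 2 * B ^ 2)
              exact mul_le_mul_of_nonneg_left (by linarith) (Real.exp_nonneg _)
          _ = Real.exp (t * μ + t ^ 2 * B ^ 2) := (Real.exp_add _ _).symm
      set T : ℝ := μ * n + δ' * n with hT
      -- pointwise bound on bad set
      have hpt : ∀ a ∈ Finset.univ.filter
          (fun a : Fin n → A => ¬ (∑ i, Y (a i) ≤ T)),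
          ∏ i, P (a i) ≤ Real.exp (-(t * T)) * ∏ i, (P (a i) * Real.exp (t * Y (a i))) := by
        intro a ha
        have hbad' : T < ∑ i, Y (a i) := by
          have := (Finset.mem_filter.1 ha).2
          linarith [not_le.1 this]
        have hprodpos : 0 < ∏ i, P (a i) := Finset.prod_pos fun i _ => hpos (a i)
        have heq : Real.exp (-(t * T)) * ∏ i, (P (a i) * Real.exp (t * Y (a i)))
            = (∏ i, P (a i)) * Real.exp (t * ((∑ i, Y (a i)) - T)) := by
          rw [Finset.prod_mul_distrib, ← Real.exp_sum, mul_comm (Real.exp (-(t * T))),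
            mul_assoc, ← Real.exp_add]
          congr 1
          rw [mul_sub, Finset.mul_sum]
          ring
        rw [heq]
        have h1 : 1 ≤ Real.exp (t * ((∑ i, Y (a i)) - T)) := by
          rw [Real.one_le_exp_iff]
          nlinarith
        nlinarith
      calc ∑ a ∈ Finset.univ.filter
            (fun a : Fin n → A => ¬ (∑ i, Y (a i) ≤ T)), ∏ i, P (a i)
          ≤ ∑ a ∈ Finset.univ.filter
            (fun a : Fin n → A => ¬ (∑ i, Y (a i) ≤ T)),
              Real.exp (-(t * T)) * ∏ i, (P (a i) * Real.exp (t * Y (a i))) :=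
            Finset.sum_le_sum hpt
        _ ≤ ∑ a : Fin n → A,
              Real.exp (-(t * T)) * ∏ i, (P (a i) * Real.exp (t * Y (a i))) := by
            apply Finset.sum_le_sum_of_subset_of_nonneg (Finset.filter_subset _ _)
            intro a _ _
            have : 0 < ∏ i, (P (a i) * Real.exp (t * Y (a i))) :=
              Finset.prod_pos fun i _ => mul_pos (hpos (a i)) (Real.exp_pos _)
            positivity
        _ = Real.exp (-(t * T)) * (∑ a, P a * Real.exp (t * Y a)) ^ n := by
            rw [← Finset.mul_sum]
            congr 1
            have : (∏ _i : Fin n, ∑ j, P j * Real.exp (t * Y j))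
                = ∑ a ∈ Fintype.piFinset (fun _ : Fin n => Finset.univ),
                  ∏ i, (P (a i) * Real.exp (t * Y (a i))) := Finset.prod_univ_sum _ _
            rw [Fintype.piFinset_univ] at this
            rw [this.symm, Finset.prod_const, Finset.card_univ, Fintype.card_fin]
        _ ≤ Real.exp (-(t * T)) * (Real.exp (t * μ + t ^ 2 * B ^ 2)) ^ n := by
            apply mul_le_mul_of_nonneg_left _ (Real.exp_nonneg _)
            apply pow_le_pow_left₀ _ hM
            exact Finset.sum_nonneg fun a _ =>
              mul_nonneg (hpos a).le (Real.exp_nonneg _)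
        _ = Real.exp (-(t * T) + n * (t * μ + t ^ 2 * B ^ 2)) := by
            rw [← Real.exp_nat_mul, ← Real.exp_add]
        _ = Real.exp (-L) := by
            congr 1
            have ht2 : t ^ 2 * B ^ 2 = δ' ^ 2 / (4 * B ^ 2) := by
              rw [ht]; rw [div_pow]; rw [div_mul_eq_mul_div, div_eq_div_iff (by positivity) (by positivity)]
              ring
            have hLn : δ' ^ 2 / (4 * B ^ 2) = L / n := by
              rw [hδ'sq, mul_comm, mul_div_assoc]
              rw [div_self (by positivity : (4 : ℝ) * B ^ 2 ≠ 0), mul_one]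
            have htδ : t * δ' = 2 * (L / n) := by
              have h9 : t * δ' = δ' ^ 2 / (2 * B ^ 2) := by rw [ht]; ring
              rw [h9, hδ'sq, div_eq_iff (by positivity : (2 : ℝ) * B ^ 2 ≠ 0)]
              ring
            have : -(t * T) + n * (t * μ + t ^ 2 * B ^ 2)
                = -(t * δ') * n + (t ^ 2 * B ^ 2) * n := by rw [hT]; ring
            rw [this, htδ, ht2, hLn]
            field_simp
            ring
        _ = ε := by
            rw [hL, one_div, Real.log_inv, neg_neg, Real.exp_log hε]
    · -- trivial case: the bad set is empty
      have hempty : ∀ a : Fin n → A, ∑ i, Y (a i) ≤ μ * n + δ' * n := by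
        intro a
        have h2B : B < δ' := by nlinarith
        calc ∑ i, Y (a i) ≤ ∑ _i : Fin n, (μ + δ') := by
              apply Finset.sum_le_sum
              intro i _
              have := (abs_le.1 (hBa (a i))).2
              linarith
          _ = (μ + δ') * n := by
              rw [Finset.sum_const, Finset.card_univ, Fintype.card_fin, nsmul_eq_mul]
              ring
          _ = μ * n + δ' * n := by ring
      rw [Finset.filter_false_of_mem (fun a _ => not_not_intro (hempty a))]
      simpa using hε.le
  have hsplit := Finset.sum_filter_add_sum_filter_not Finset.univ
    (fun a : Fin n → A => ∑ i, Y (a i) ≤ μ * n + δ' * n) (fun a => ∏ i, P (a i))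
  rw [htot] at hsplit
  linarith
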